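/- For every integer m ≥ 4 and every coloring Δ: [1, 7m + ⌈m/2⌉ - 6] → {1,2,3}, there exist monochromatic m-sets X ≺ Y with 2(x_m - x_1) ≤ y_m - x_1. -/

import Mathlib

/-- `x` is a monochromatic m-set (indexed 1..m) inside `S` under coloring `Δ`. -/
def IsMonoMSet (m : ℕ) (Δ : ℕ → ℕ) (S : Finset ℕ) (x : ℕ → ℕ) : Prop :=
  (∀ i j, 1 ≤ i → i < j → j ≤ m → x i < x j) ∧
  (∀ i, 1 ≤ i → i ≤ m → x i ∈ S) ∧
  (∀ i, 1 ≤ i → i ≤ m → Δ (x i) = Δ (x 1))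

/-- There exist monochromatic m-sets X ≺ Y in `S` with 2(x_m - x_1) ≤ y_m - x_1. -/
def HasGoodPair (m : ℕ) (Δ : ℕ → ℕ) (S : Finset ℕ) : Prop :=
  ∃ x y : ℕ → ℕ, IsMonoMSet m Δ S x ∧ IsMonoMSet m Δ S y ∧
    x m < y 1 ∧ 2 * (x m - x 1) ≤ y m - x 1

/-- `g m r` : least N such that every r-coloring of [1,N] has a good pair. -/
noncomputable def g (m r : ℕ) : ℕ :=
  sInf {N | ∀ Δ : ℕ → ℕ, (∀ z ∈ Finset.Icc 1 N, Δ z ∈ Finset.Icc 1 r) →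
    HasGoodPair m Δ (Finset.Icc 1 N)}

namespace Stmt10Aux

/-- window function: the (a+i)-th smallest elements of Γ (i from 1 to m). -/
noncomputable def wfun (Γ : Finset ℕ) (m a : ℕ) (i : ℕ) : ℕ :=
  if h : a + m ≤ Γ.card ∧ 1 ≤ m then
    Γ.orderEmbOfFin rfl ⟨a + min (i - 1) (m - 1), by omega⟩
  else 0

lemma wfun_eq {Γ : Finset ℕ} {m a i : ℕ} (h : a + m ≤ Γ.card) (hm : 1 ≤ m)
    (him : i ≤ m) (hidx : a + (i - 1) < Γ.card) :
    wfun Γ m a i = Γ.orderEmbOfFin rfl ⟨a + (i - 1), hidx⟩ := by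
  rw [wfun, dif_pos ⟨h, hm⟩]
  congr 1
  exact Fin.ext (by simp only []; omega)

lemma wfun_mem {Γ : Finset ℕ} {m a : ℕ} (h : a + m ≤ Γ.card) (hm : 1 ≤ m) (i : ℕ) :
    wfun Γ m a i ∈ Γ := by
  rw [wfun, dif_pos ⟨h, hm⟩]
  exact Finset.orderEmbOfFin_mem _ _ _

lemma wfun_lt {Γ : Finset ℕ} {m a i b j : ℕ} (ha : a + m ≤ Γ.card) (hb : b + m ≤ Γ.card)
    (hm : 1 ≤ m) (him : i ≤ m) (hjm : j ≤ m) (hij : a + (i - 1) < b + (j - 1)) :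
    wfun Γ m a i < wfun Γ m b j := by
  rw [wfun_eq ha hm him (by omega), wfun_eq hb hm hjm (by omega)]
  exact (Γ.orderEmbOfFin rfl).strictMono (by exact hij)

lemma wfun_max {Γ : Finset ℕ} {m : ℕ} (hm : 1 ≤ m) (h : m ≤ Γ.card) (hne : Γ.Nonempty) :
    wfun Γ m (Γ.card - m) m = Γ.max' hne := by
  have hc : 0 < Γ.card := by omega
  rw [wfun_eq (by omega) hm le_rfl (by omega)]
  have : (⟨Γ.card - m + (m - 1), by omega⟩ : Fin Γ.card)
      = ⟨Γ.card - 1, Nat.sub_lt hc (Nat.succ_pos 0)⟩ := Fin.ext (by simp only []; omega)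
  rw [this, Finset.orderEmbOfFin_last rfl hc]

lemma mkMono {m : ℕ} {Δ : ℕ → ℕ} {S Γ : Finset ℕ} {a c : ℕ}
    (hm : 1 ≤ m) (h : a + m ≤ Γ.card) (hS : ∀ t ∈ Γ, t ∈ S) (hc : ∀ t ∈ Γ, Δ t = c) :
    IsMonoMSet m Δ S (wfun Γ m a) := by
  refine ⟨fun i j hi hij hjm => wfun_lt h h hm (by omega) hjm (by omega),
    fun i _ _ => hS _ (wfun_mem h hm i),
    fun i _ _ => by rw [hc _ (wfun_mem h hm i), hc _ (wfun_mem h hm 1)]⟩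

lemma cover {Δ : ℕ → ℕ} {c1 c2 c3 : ℕ} (I : Finset ℕ)
    (h : ∀ z ∈ I, Δ z = c1 ∨ Δ z = c2 ∨ Δ z = c3) :
    I.card ≤ (I.filter (fun z => Δ z = c1)).card + (I.filter (fun z => Δ z = c2)).card
      + (I.filter (fun z => Δ z = c3)).card := by
  classical
  calc I.card ≤ ((I.filter (fun z => Δ z = c1)) ∪ (I.filter (fun z => Δ z = c2))
        ∪ (I.filter (fun z => Δ z = c3))).card := by
        apply Finset.card_le_card
        intro z hz
        simp only [Finset.mem_union, Finset.mem_filter]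
        rcases h z hz with h' | h' | h' <;> tauto
  _ ≤ ((I.filter (fun z => Δ z = c1)) ∪ (I.filter (fun z => Δ z = c2))).card
        + (I.filter (fun z => Δ z = c3)).card := Finset.card_union_le _ _
  _ ≤ _ := Nat.add_le_add_right (Finset.card_union_le _ _) _

lemma card_lt_index {Γ : Finset ℕ} {k : ℕ} (hk : k < Γ.card) :
    (Γ.filter (fun z => z < Γ.orderEmbOfFin rfl ⟨k, hk⟩)).card ≤ k := by
  classical
  have hsub : Γ.filter (fun z => z < Γ.orderEmbOfFin rfl ⟨k, hk⟩) ⊆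
      (Finset.range k).attach.image
        (fun j => Γ.orderEmbOfFin rfl ⟨j.1, lt_trans (Finset.mem_range.mp j.2) hk⟩) := by
    intro z hz
    obtain ⟨hzΓ, hzlt⟩ := Finset.mem_filter.mp hz
    have hz' : z ∈ (↑Γ : Set ℕ) := hzΓ
    rw [← Finset.range_orderEmbOfFin Γ rfl] at hz'
    obtain ⟨j, hj⟩ := hz'
    have hlt2 : Γ.orderEmbOfFin rfl j < Γ.orderEmbOfFin rfl ⟨k, hk⟩ := by
      rw [hj]; exact hzlt
    have hjk : j.1 < k := (Γ.orderEmbOfFin rfl).lt_iff_lt.mp hlt2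
    refine Finset.mem_image.mpr ⟨⟨j.1, Finset.mem_range.mpr hjk⟩, Finset.mem_attach _ _, ?_⟩
    rw [← hj]
  calc _ ≤ _ := Finset.card_le_card hsub
  _ ≤ (Finset.range k).attach.card := Finset.card_image_le
  _ = k := by simp


lemma K1 {m N : ℕ} {Δ : ℕ → ℕ} (hm : 2 ≤ m)
    (hn : ¬ HasGoodPair m Δ (Finset.Icc 1 N))
    {x : ℕ → ℕ} (hX : IsMonoMSet m Δ (Finset.Icc 1 N) x)
    {c : ℕ} (hc : m ≤ ((Finset.Icc (x m + 1) N).filter (fun z => Δ z = c)).card) :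
    ∀ z, 2 * x m - x 1 ≤ z → z ≤ N → Δ z ≠ c := by
  classical
  intro z hz1 hz2 hzc
  set D := (Finset.Icc (x m + 1) N).filter (fun z => Δ z = c) with hD
  have hDmem : ∀ t, t ∈ D ↔ (x m + 1 ≤ t ∧ t ≤ N) ∧ Δ t = c := by
    intro t; rw [hD, Finset.mem_filter, Finset.mem_Icc]
  have hx1m : x 1 < x m := hX.1 1 m le_rfl (by omega) le_rfl
  have hzD : z ∈ D := (hDmem z).mpr ⟨⟨by omega, hz2⟩, hzc⟩
  have hDne : D.Nonempty := ⟨z, hzD⟩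
  have hwin : (D.card - m) + m ≤ D.card := by omega
  have hDS : ∀ t ∈ D, t ∈ Finset.Icc 1 N := by
    intro t ht
    have := (hDmem t).mp ht
    rw [Finset.mem_Icc]; omega
  have hDc : ∀ t ∈ D, Δ t = c := fun t ht => ((hDmem t).mp ht).2
  have hY := mkMono (Δ := Δ) (show 1 ≤ m by omega) hwin hDS hDc
  have hy1 : x m < wfun D m (D.card - m) 1 := by
    have h1 := (hDmem _).mp (wfun_mem hwin (show 1 ≤ m by omega) 1)
    omega
  have hym : z ≤ wfun D m (D.card - m) m := by
    rw [wfun_max (by omega) (by omega) hDne]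
    exact Finset.le_max' _ _ hzD
  exact hn ⟨x, wfun D m (D.card - m), hX, hY, hy1, by omega⟩

lemma core {m : ℕ} {Δ : ℕ → ℕ} (hm : 4 ≤ m) {γ α β : ℕ}
    (hΔ3 : ∀ z ∈ Finset.Icc 1 (7 * m + (m + 1) / 2 - 6),
      Δ z = γ ∨ Δ z = α ∨ Δ z = β)
    (hn : ¬ HasGoodPair m Δ (Finset.Icc 1 (7 * m + (m + 1) / 2 - 6)))
    {x : ℕ → ℕ} (hX : IsMonoMSet m Δ (Finset.Icc 1 (7 * m + (m + 1) / 2 - 6)) x)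
    (hb : 1 ≤ x 1) (hp : x m ≤ 3 * m - 2)
    (hγ : m ≤ ((Finset.Icc (x m + 1) (7 * m + (m + 1) / 2 - 6)).filter
      (fun z => Δ z = γ)).card)
    (hα : ((Finset.Icc (x m + 1) (7 * m + (m + 1) / 2 - 6)).filter
      (fun z => Δ z = α)).card ≤ m - 1)
    (hβ : ((Finset.Icc (x m + 1) (7 * m + (m + 1) / 2 - 6)).filter
      (fun z => Δ z = β)).card ≤ m - 1) : False := by
  classical
  set N := 7 * m + (m + 1) / 2 - 6 with hN
  set b := x 1 with hbdef
  set p := x m with hpdef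
  have hbp : x 1 < x m := hX.1 1 m le_rfl (by omega) le_rfl
  have hK := K1 (by omega) hn hX hγ
  set Γ := (Finset.Icc (p + 1) N).filter (fun z => Δ z = γ) with hΓ
  have hΓmem : ∀ t, t ∈ Γ ↔ (p + 1 ≤ t ∧ t ≤ N) ∧ Δ t = γ := by
    intro t; rw [hΓ, Finset.mem_filter, Finset.mem_Icc]
  have hΓS : ∀ t ∈ Γ, t ∈ Finset.Icc 1 N := by
    intro t ht
    have := (hΓmem t).mp ht
    rw [Finset.mem_Icc]; omega
  have hΓc : ∀ t ∈ Γ, Δ t = γ := fun t ht => ((hΓmem t).mp ht).2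
  have hΓne : Γ.Nonempty := Finset.card_pos.mp (by omega)
  set q := Γ.max' hΓne with hq
  have hqmem : q ∈ Γ := Γ.max'_mem hΓne
  have hqfacts : (p + 1 ≤ q ∧ q ≤ N) ∧ Δ q = γ := (hΓmem q).mp hqmem
  have hqv : q < 2 * p - b := by
    by_contra hcon
    exact hK q (by omega) hqfacts.1.2 hqfacts.2
  -- counting on the suffix (q, N]
  have hγq : ((Finset.Icc (q + 1) N).filter (fun z => Δ z = γ)).card = 0 := by
    rw [Finset.card_eq_zero, Finset.eq_empty_iff_forall_notMem]
    intro z hz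
    rw [Finset.mem_filter, Finset.mem_Icc] at hz
    have hzΓ : z ∈ Γ := (hΓmem z).mpr ⟨⟨by omega, hz.1.2⟩, hz.2⟩
    have hzq : z ≤ q := by rw [hq]; exact Finset.le_max' _ _ hzΓ
    omega
  have hcov2 := cover (Δ := Δ) (c1 := γ) (c2 := α) (c3 := β) (Finset.Icc (q + 1) N)
    (fun z hz => hΔ3 z (by rw [Finset.mem_Icc] at hz ⊢; omega))
  have hcard2 : (Finset.Icc (q + 1) N).card = N + 1 - (q + 1) := Nat.card_Icc _ _
  -- lower bound on Γ.card
  have hcovp := cover (Δ := Δ) (c1 := γ) (c2 := α) (c3 := β) (Finset.Icc (p + 1) N)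
    (fun z hz => hΔ3 z (by rw [Finset.mem_Icc] at hz ⊢; omega))
  rw [← hΓ] at hcovp
  have hcardp : (Finset.Icc (p + 1) N).card = N + 1 - (p + 1) := Nat.card_Icc _ _
  have hs : 2 * m ≤ Γ.card := by omega
  -- the two windows inside Γ
  have hwin0 : 0 + m ≤ Γ.card := by omega
  have hwin1 : (Γ.card - m) + m ≤ Γ.card := by omega
  have hX1 := mkMono (Δ := Δ) (show 1 ≤ m by omega) hwin0 hΓS hΓc
  have hY1 := mkMono (Δ := Δ) (show 1 ≤ m by omega) hwin1 hΓS hΓc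
  have hx1p : p + 1 ≤ wfun Γ m 0 1 := by
    have h1 := (hΓmem _).mp (wfun_mem hwin0 (show 1 ≤ m by omega) 1)
    omega
  have hxmq : wfun Γ m 0 m ≤ q := by
    rw [hq]
    exact Finset.le_max' _ _ (wfun_mem hwin0 (show 1 ≤ m by omega) m)
  have hx1xm : wfun Γ m 0 1 < wfun Γ m 0 m := by
    apply wfun_lt hwin0 hwin0 (by omega) (by omega) le_rfl
    omega
  have hym : wfun Γ m (Γ.card - m) m = q :=
    (wfun_max (by omega) (by omega) hΓne).trans hq.symm
  have hlt : wfun Γ m 0 m < wfun Γ m (Γ.card - m) 1 := by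
    apply wfun_lt hwin0 hwin1 (by omega) le_rfl (by omega)
    omega
  have hnp : ¬ (2 * (wfun Γ m 0 m - wfun Γ m 0 1)
      ≤ wfun Γ m (Γ.card - m) m - wfun Γ m 0 1) :=
    fun hle => hn ⟨_, _, hX1, hY1, hlt, hle⟩
  rw [hym] at hnp
  have h2xm : q + wfun Γ m 0 1 + 1 ≤ 2 * wfun Γ m 0 m := by omega
  -- at most m-1 elements of Γ below the m-th smallest
  have hkidx : m - 1 < Γ.card := by omega
  have hxm_eq : wfun Γ m 0 m = Γ.orderEmbOfFin rfl ⟨m - 1, hkidx⟩ := by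
    rw [wfun_eq hwin0 (by omega) le_rfl (by omega)]
    congr 1
    apply Fin.ext
    show 0 + (m - 1) = m - 1
    omega
  have hC2 := card_lt_index hkidx
  rw [← hxm_eq] at hC2
  have hγJ : ((Finset.Icc (p + 1) (wfun Γ m 0 m - 1)).filter
      (fun z => Δ z = γ)).card ≤ m - 1 := by
    refine le_trans (Finset.card_le_card ?_) hC2
    intro z hz
    rw [Finset.mem_filter, Finset.mem_Icc] at hz
    rw [Finset.mem_filter]
    refine ⟨(hΓmem z).mpr ⟨⟨hz.1.1, by omega⟩, hz.2⟩, by omega⟩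
  -- α and β : (p, xm) and (q, N] parts together at most m-1
  have hseg : ∀ c : ℕ, ((Finset.Icc (p + 1) N).filter (fun z => Δ z = c)).card ≤ m - 1 →
      ((Finset.Icc (p + 1) (wfun Γ m 0 m - 1)).filter (fun z => Δ z = c)).card
      + ((Finset.Icc (q + 1) N).filter (fun z => Δ z = c)).card ≤ m - 1 := by
    intro c hcc
    have hdis : Disjoint ((Finset.Icc (p + 1) (wfun Γ m 0 m - 1)).filter (fun z => Δ z = c))
        ((Finset.Icc (q + 1) N).filter (fun z => Δ z = c)) := by
      rw [Finset.disjoint_left]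
      intro z hz1 hz2
      rw [Finset.mem_filter, Finset.mem_Icc] at hz1 hz2
      omega
    rw [← Finset.card_union_of_disjoint hdis]
    refine le_trans (Finset.card_le_card ?_) hcc
    intro z hz
    rw [Finset.mem_union, Finset.mem_filter, Finset.mem_filter, Finset.mem_Icc,
      Finset.mem_Icc] at hz
    rw [Finset.mem_filter, Finset.mem_Icc]
    rcases hz with h | h
    · exact ⟨⟨h.1.1, by omega⟩, h.2⟩
    · exact ⟨⟨by omega, h.1.2⟩, h.2⟩
  have hαsum := hseg α hα
  have hβsum := hseg β hβ
  -- cover the interval (p, xm)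
  have hcovJ := cover (Δ := Δ) (c1 := γ) (c2 := α) (c3 := β)
    (Finset.Icc (p + 1) (wfun Γ m 0 m - 1))
    (fun z hz => hΔ3 z (by rw [Finset.mem_Icc] at hz ⊢; omega))
  have hcardJ : (Finset.Icc (p + 1) (wfun Γ m 0 m - 1)).card
      = (wfun Γ m 0 m - 1) + 1 - (p + 1) := Nat.card_Icc _ _
  omega

end Stmt10Aux

open Stmt10Aux in
theorem stmt10 (m : ℕ) (hm : 4 ≤ m) (Δ : ℕ → ℕ)
    (hΔ : ∀ z ∈ Finset.Icc 1 (7 * m + (m + 1) / 2 - 6), Δ z ∈ Finset.Icc 1 3) :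
    HasGoodPair m Δ (Finset.Icc 1 (7 * m + (m + 1) / 2 - 6)) := by
  classical
  by_contra hn
  have hΔ3 : ∀ z ∈ Finset.Icc 1 (7 * m + (m + 1) / 2 - 6),
      Δ z = 1 ∨ Δ z = 2 ∨ Δ z = 3 := by
    intro z hz
    have h := hΔ z hz
    rw [Finset.mem_Icc] at h
    omega
  -- pigeonhole in the prefix [1, 3m-2]
  have hsub1 : ∀ z ∈ Finset.Icc 1 (3 * m - 2),
      z ∈ Finset.Icc 1 (7 * m + (m + 1) / 2 - 6) := by
    intro z hz; rw [Finset.mem_Icc] at hz ⊢; omega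
  have hcov1 := cover (Δ := Δ) (c1 := 1) (c2 := 2) (c3 := 3)
    (Finset.Icc 1 (3 * m - 2)) (fun z hz => hΔ3 z (hsub1 z hz))
  have hcard1 : (Finset.Icc 1 (3 * m - 2)).card = 3 * m - 2 + 1 - 1 := Nat.card_Icc _ _
  obtain ⟨c1, hc1⟩ : ∃ c, m ≤ ((Finset.Icc 1 (3 * m - 2)).filter
      (fun z => Δ z = c)).card := by
    by_contra hcon
    push_neg at hcon
    have h1 := hcon 1
    have h2 := hcon 2
    have h3 := hcon 3
    omega
  set T := (Finset.Icc 1 (3 * m - 2)).filter (fun z => Δ z = c1) with hT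
  have hTmem : ∀ t, t ∈ T ↔ (1 ≤ t ∧ t ≤ 3 * m - 2) ∧ Δ t = c1 := by
    intro t; rw [hT, Finset.mem_filter, Finset.mem_Icc]
  have hTS : ∀ t ∈ T, t ∈ Finset.Icc 1 (7 * m + (m + 1) / 2 - 6) := by
    intro t ht
    have := (hTmem t).mp ht
    rw [Finset.mem_Icc]; omega
  have hTc : ∀ t ∈ T, Δ t = c1 := fun t ht => ((hTmem t).mp ht).2
  have hwin : 0 + m ≤ T.card := by omega
  have hXmono := mkMono (Δ := Δ) (show 1 ≤ m by omega) hwin hTS hTc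
  have hx1b : 1 ≤ wfun T m 0 1 := by
    have := (hTmem _).mp (wfun_mem hwin (show 1 ≤ m by omega) 1)
    omega
  have hxmb : wfun T m 0 m ≤ 3 * m - 2 := by
    have := (hTmem _).mp (wfun_mem hwin (show 1 ≤ m by omega) m)
    omega
  have hbp : wfun T m 0 1 < wfun T m 0 m := hXmono.1 1 m le_rfl (by omega) le_rfl
  set x : ℕ → ℕ := wfun T m 0 with hx
  -- heavy-color analysis in (x m, N]
  have hKor : ∀ c, m ≤ ((Finset.Icc (x m + 1) (7 * m + (m + 1) / 2 - 6)).filter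
        (fun z => Δ z = c)).card →
      ((Finset.Icc (2 * x m - x 1) (7 * m + (m + 1) / 2 - 6)).filter
        (fun z => Δ z = c)).card = 0 := by
    intro c hc
    rw [Finset.card_eq_zero, Finset.eq_empty_iff_forall_notMem]
    intro z hz
    rw [Finset.mem_filter, Finset.mem_Icc] at hz
    exact K1 (by omega) hn hXmono hc z hz.1.1 hz.1.2 hz.2
  have h1or : (((Finset.Icc (x m + 1) (7 * m + (m + 1) / 2 - 6)).filter
        (fun z => Δ z = 1)).card < m) ∨
      (((Finset.Icc (2 * x m - x 1) (7 * m + (m + 1) / 2 - 6)).filter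
        (fun z => Δ z = 1)).card = 0) := by
    rcases Nat.lt_or_ge (((Finset.Icc (x m + 1) (7 * m + (m + 1) / 2 - 6)).filter
        (fun z => Δ z = 1)).card) m with h | h
    · exact Or.inl h
    · exact Or.inr (hKor 1 h)
  have h2or : (((Finset.Icc (x m + 1) (7 * m + (m + 1) / 2 - 6)).filter
        (fun z => Δ z = 2)).card < m) ∨
      (((Finset.Icc (2 * x m - x 1) (7 * m + (m + 1) / 2 - 6)).filter
        (fun z => Δ z = 2)).card = 0) := by
    rcases Nat.lt_or_ge (((Finset.Icc (x m + 1) (7 * m + (m + 1) / 2 - 6)).filter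
        (fun z => Δ z = 2)).card) m with h | h
    · exact Or.inl h
    · exact Or.inr (hKor 2 h)
  have h3or : (((Finset.Icc (x m + 1) (7 * m + (m + 1) / 2 - 6)).filter
        (fun z => Δ z = 3)).card < m) ∨
      (((Finset.Icc (2 * x m - x 1) (7 * m + (m + 1) / 2 - 6)).filter
        (fun z => Δ z = 3)).card = 0) := by
    rcases Nat.lt_or_ge (((Finset.Icc (x m + 1) (7 * m + (m + 1) / 2 - 6)).filter
        (fun z => Δ z = 3)).card) m with h | h
    · exact Or.inl h
    · exact Or.inr (hKor 3 h)
  have hIccsub : Finset.Icc (2 * x m - x 1) (7 * m + (m + 1) / 2 - 6)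
      ⊆ Finset.Icc (x m + 1) (7 * m + (m + 1) / 2 - 6) :=
    Finset.Icc_subset_Icc (by omega) le_rfl
  have hele1 : ((Finset.Icc (2 * x m - x 1) (7 * m + (m + 1) / 2 - 6)).filter
        (fun z => Δ z = 1)).card
      ≤ ((Finset.Icc (x m + 1) (7 * m + (m + 1) / 2 - 6)).filter
        (fun z => Δ z = 1)).card :=
    Finset.card_le_card (Finset.filter_subset_filter _ hIccsub)
  have hele2 : ((Finset.Icc (2 * x m - x 1) (7 * m + (m + 1) / 2 - 6)).filter
        (fun z => Δ z = 2)).card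
      ≤ ((Finset.Icc (x m + 1) (7 * m + (m + 1) / 2 - 6)).filter
        (fun z => Δ z = 2)).card :=
    Finset.card_le_card (Finset.filter_subset_filter _ hIccsub)
  have hele3 : ((Finset.Icc (2 * x m - x 1) (7 * m + (m + 1) / 2 - 6)).filter
        (fun z => Δ z = 3)).card
      ≤ ((Finset.Icc (x m + 1) (7 * m + (m + 1) / 2 - 6)).filter
        (fun z => Δ z = 3)).card :=
    Finset.card_le_card (Finset.filter_subset_filter _ hIccsub)
  have hcovp := cover (Δ := Δ) (c1 := 1) (c2 := 2) (c3 := 3)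
    (Finset.Icc (x m + 1) (7 * m + (m + 1) / 2 - 6))
    (fun z hz => hΔ3 z (by rw [Finset.mem_Icc] at hz ⊢; omega))
  have hcardp : (Finset.Icc (x m + 1) (7 * m + (m + 1) / 2 - 6)).card
      = (7 * m + (m + 1) / 2 - 6) + 1 - (x m + 1) := Nat.card_Icc _ _
  have hcove := cover (Δ := Δ) (c1 := 1) (c2 := 2) (c3 := 3)
    (Finset.Icc (2 * x m - x 1) (7 * m + (m + 1) / 2 - 6))
    (fun z hz => hΔ3 z (by rw [Finset.mem_Icc] at hz ⊢; omega))
  have hcarde : (Finset.Icc (2 * x m - x 1) (7 * m + (m + 1) / 2 - 6)).card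
      = (7 * m + (m + 1) / 2 - 6) + 1 - (2 * x m - x 1) := Nat.card_Icc _ _
  have tricho :
      (m ≤ ((Finset.Icc (x m + 1) (7 * m + (m + 1) / 2 - 6)).filter
          (fun z => Δ z = 1)).card ∧
        ((Finset.Icc (x m + 1) (7 * m + (m + 1) / 2 - 6)).filter
          (fun z => Δ z = 2)).card ≤ m - 1 ∧
        ((Finset.Icc (x m + 1) (7 * m + (m + 1) / 2 - 6)).filter
          (fun z => Δ z = 3)).card ≤ m - 1) ∨
      (m ≤ ((Finset.Icc (x m + 1) (7 * m + (m + 1) / 2 - 6)).filter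
          (fun z => Δ z = 2)).card ∧
        ((Finset.Icc (x m + 1) (7 * m + (m + 1) / 2 - 6)).filter
          (fun z => Δ z = 1)).card ≤ m - 1 ∧
        ((Finset.Icc (x m + 1) (7 * m + (m + 1) / 2 - 6)).filter
          (fun z => Δ z = 3)).card ≤ m - 1) ∨
      (m ≤ ((Finset.Icc (x m + 1) (7 * m + (m + 1) / 2 - 6)).filter
          (fun z => Δ z = 3)).card ∧
        ((Finset.Icc (x m + 1) (7 * m + (m + 1) / 2 - 6)).filter
          (fun z => Δ z = 1)).card ≤ m - 1 ∧
        ((Finset.Icc (x m + 1) (7 * m + (m + 1) / 2 - 6)).filter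
          (fun z => Δ z = 2)).card ≤ m - 1) := by
    omega
  rcases tricho with ⟨hh, hl1, hl2⟩ | ⟨hh, hl1, hl2⟩ | ⟨hh, hl1, hl2⟩
  · exact core hm hΔ3 hn hXmono hx1b hxmb hh hl1 hl2
  · have hΔ3' : ∀ z ∈ Finset.Icc 1 (7 * m + (m + 1) / 2 - 6),
        Δ z = 2 ∨ Δ z = 1 ∨ Δ z = 3 :=
      fun z hz => (hΔ3 z hz).elim (fun h => Or.inr (Or.inl h))
        (fun h => h.elim (fun h2 => Or.inl h2) (fun h3 => Or.inr (Or.inr h3)))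
    exact core (γ := 2) (α := 1) (β := 3) hm hΔ3' hn hXmono hx1b hxmb hh hl1 hl2
  · have hΔ3' : ∀ z ∈ Finset.Icc 1 (7 * m + (m + 1) / 2 - 6),
        Δ z = 3 ∨ Δ z = 1 ∨ Δ z = 2 :=
      fun z hz => (hΔ3 z hz).elim (fun h => Or.inr (Or.inl h))
        (fun h => h.elim (fun h2 => Or.inr (Or.inr h2)) (fun h3 => Or.inl h3))
    exact core (γ := 3) (α := 1) (β := 2) hm hΔ3' hn hXmono hx1b hxmb hh hl1 hl2
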